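/- For all m, n ≥ 1, the commutator subgroup ⁅D_m, D_n⁆ is contained in D_{m+n}, where D_n = { g ∈ G | (g : k[G]) - 1 ∈ Δ^n }. (This is the filtration property of the Zassenhaus p-filtration M_n used throughout, ensuring [M_m, M_n] ⊆ M_{m+n}.) -/

import Mathlib

/-- The augmentation homomorphism `ε : k[G] → k`, sending every group element to `1`. -/
noncomputable def aug (k : Type*) [Field k] (G : Type*) [Group G] :
    MonoidAlgebra k G →ₐ[k] k :=
  MonoidAlgebra.lift k k G 1

/-- The augmentation ideal `Δ = ker ε`, viewed as a `k`-submodule of `k[G]`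
(so that its powers `Δ^n` make sense in the noncommutative algebra `k[G]`). -/
noncomputable def augIdeal (k : Type*) [Field k] (G : Type*) [Group G] :
    Submodule k (MonoidAlgebra k G) :=
  (RingHom.ker (aug k G).toRingHom).restrictScalars k

/-- The `n`-th dimension subgroup `D_n = { g ∈ G | g - 1 ∈ Δ^n }` (as a set). -/
noncomputable def dimSet (k : Type*) [Field k] (G : Type*) [Group G] (n : ℕ) : Set G :=
  {g : G | (MonoidAlgebra.of k G g : MonoidAlgebra k G) - 1 ∈ augIdeal k G ^ n}

section Aux

variable {k : Type*} [Field k] {G : Type*} [Group G]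

lemma mem_augIdeal_iff {x : MonoidAlgebra k G} :
    x ∈ augIdeal k G ↔ aug k G x = 0 := Iff.rfl

lemma aug_of (g : G) : aug k G (MonoidAlgebra.of k G g) = 1 := by simp [aug]

lemma of_sub_one_mem (g : G) :
    (MonoidAlgebra.of k G g : MonoidAlgebra k G) - 1 ∈ augIdeal k G := by
  rw [mem_augIdeal_iff, map_sub, map_one, aug_of, sub_self]

/-- `Δ^n` absorbs multiplication on the right for `n ≥ 1`. -/
lemma mul_right_mem {n : ℕ} (hn : 1 ≤ n) {x : MonoidAlgebra k G}
    (hx : x ∈ augIdeal k G ^ n) (a : MonoidAlgebra k G) :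
    x * a ∈ augIdeal k G ^ n := by
  obtain ⟨n, rfl⟩ := Nat.exists_eq_add_of_le hn
  rw [add_comm, pow_succ] at hx ⊢
  refine Submodule.mul_induction_on hx (fun y hy d hd => ?_) (fun x y hx hy => ?_)
  · rw [mul_assoc]
    refine Submodule.mul_mem_mul hy ?_
    rw [mem_augIdeal_iff, map_mul, mem_augIdeal_iff.mp hd, zero_mul]
  · rw [add_mul]; exact add_mem hx hy

/-- `Δ^n` absorbs multiplication on the left for `n ≥ 1`. -/
lemma mul_left_mem {n : ℕ} (hn : 1 ≤ n) {x : MonoidAlgebra k G}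
    (hx : x ∈ augIdeal k G ^ n) (a : MonoidAlgebra k G) :
    a * x ∈ augIdeal k G ^ n := by
  obtain ⟨n, rfl⟩ := Nat.exists_eq_add_of_le hn
  rw [add_comm, pow_succ'] at hx ⊢
  refine Submodule.mul_induction_on hx (fun d hd y hy => ?_) (fun x y hx hy => ?_)
  · rw [← mul_assoc]
    refine Submodule.mul_mem_mul ?_ hy
    rw [mem_augIdeal_iff, map_mul, mem_augIdeal_iff.mp hd, mul_zero]
  · rw [mul_add]; exact add_mem hx hy

/-- `D_n` is a subgroup for `n ≥ 1`. -/
noncomputable def dimSubgroup (k : Type*) [Field k] (G : Type*) [Group G]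
    {n : ℕ} (hn : 1 ≤ n) : Subgroup G where
  carrier := dimSet k G n
  one_mem' := by
    show (MonoidAlgebra.of k G 1 : MonoidAlgebra k G) - 1 ∈ augIdeal k G ^ n
    rw [map_one, sub_self]
    exact zero_mem _
  mul_mem' := by
    intro a b ha hb
    show (MonoidAlgebra.of k G (a * b) : MonoidAlgebra k G) - 1 ∈ augIdeal k G ^ n
    have h : (MonoidAlgebra.of k G (a * b) : MonoidAlgebra k G) - 1 =
        (MonoidAlgebra.of k G a - 1) * MonoidAlgebra.of k G b +
          (MonoidAlgebra.of k G b - 1) := by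
      rw [map_mul]; noncomm_ring
    rw [h]
    exact add_mem (mul_right_mem hn ha _) hb
  inv_mem' := by
    intro a ha
    show (MonoidAlgebra.of k G a⁻¹ : MonoidAlgebra k G) - 1 ∈ augIdeal k G ^ n
    have h : (MonoidAlgebra.of k G a⁻¹ : MonoidAlgebra k G) - 1 =
        -(MonoidAlgebra.of k G a⁻¹ * (MonoidAlgebra.of k G a - 1)) := by
      rw [mul_sub, ← map_mul, inv_mul_cancel, map_one, mul_one, neg_sub]
    rw [h]
    exact neg_mem (mul_left_mem hn ha _)

end Aux

/-- For `m, n ≥ 1`, the commutator subgroup `⁅D_m, D_n⁆` is contained in `D_{m+n}`: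
this is the filtration property `[M_m, M_n] ⊆ M_{m+n}` of the Zassenhaus `p`-filtration. -/
theorem commutator_dimSubgroup_subset (k : Type*) [Field k] (G : Type*) [Group G]
    (m n : ℕ) (hm : 1 ≤ m) (hn : 1 ≤ n)
    (H K : Subgroup G) (hH : (H : Set G) = dimSet k G m) (hK : (K : Set G) = dimSet k G n) :
    ((⁅H, K⁆ : Subgroup G) : Set G) ⊆ dimSet k G (m + n) := by
  have hmn : 1 ≤ m + n := le_trans hm (Nat.le_add_right m n)
  have hle : ⁅H, K⁆ ≤ dimSubgroup k G hmn := by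
    rw [Subgroup.commutator_le]
    intro g hg h hh
    have hgm : (MonoidAlgebra.of k G g : MonoidAlgebra k G) - 1 ∈ augIdeal k G ^ m := by
      have : g ∈ (H : Set G) := hg
      rwa [hH] at this
    have hhn : (MonoidAlgebra.of k G h : MonoidAlgebra k G) - 1 ∈ augIdeal k G ^ n := by
      have : h ∈ (K : Set G) := hh
      rwa [hK] at this
    show (MonoidAlgebra.of k G (g * h * g⁻¹ * h⁻¹) : MonoidAlgebra k G) - 1 ∈ augIdeal k G ^ (m + n)
    set a := (MonoidAlgebra.of k G g : MonoidAlgebra k G)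
    set b := (MonoidAlgebra.of k G h : MonoidAlgebra k G)
    set c := (MonoidAlgebra.of k G (g⁻¹ * h⁻¹) : MonoidAlgebra k G)
    have hbac : b * a * c = 1 := by
      simp only [a, b, c, ← map_mul]
      rw [show h * g * (g⁻¹ * h⁻¹) = 1 by group, map_one]
    have key : (MonoidAlgebra.of k G (g * h * g⁻¹ * h⁻¹) : MonoidAlgebra k G) - 1 =
        ((a - 1) * (b - 1) - (b - 1) * (a - 1)) * c := by
      have : (MonoidAlgebra.of k G (g * h * g⁻¹ * h⁻¹) : MonoidAlgebra k G) = a * b * c := by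
        simp only [a, b, c, ← map_mul]
        congr 1
        group
      calc (MonoidAlgebra.of k G (g * h * g⁻¹ * h⁻¹) : MonoidAlgebra k G) - 1
          = a * b * c - b * a * c := by rw [this, hbac]
        _ = ((a - 1) * (b - 1) - (b - 1) * (a - 1)) * c := by noncomm_ring
    rw [key]
    refine mul_right_mem hmn (sub_mem ?_ ?_) c
    · rw [pow_add]; exact Submodule.mul_mem_mul hgm hhn
    · rw [add_comm, pow_add]; exact Submodule.mul_mem_mul hhn hgm
  intro x hx
  exact hle hx
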